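/- Let Z ∈ M_{m·n}(ℂ) be Hermitian and σ ∈ M_n(ℂ) be Hermitian. Define Φ(Z) = Z − (I_m/m) ⊗ (tr_1(Z) − σ). Then tr_1(Φ(Z)) = σ, and for every Hermitian X ∈ M_{m·n}(ℂ) with tr_1(X) = σ, one has ‖Z − Φ(Z)‖_F ≤ ‖Z − X‖_F. -/

import Mathlib

open Matrix Kronecker Finset

/-- Partial trace over the first subsystem: `tr_1(ρ) = Σ_j ρ_{jj} ∈ M_n`. -/
noncomputable def trace1 {m n : ℕ} (ρ : Matrix (Fin m × Fin n) (Fin m × Fin n) ℂ) :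
    Matrix (Fin n) (Fin n) ℂ :=
  Matrix.of fun i j => ∑ k : Fin m, ρ (k, i) (k, j)

/-- Frobenius norm of a square complex matrix. -/
noncomputable def frobNorm {n : Type*} [Fintype n] (X : Matrix n n ℂ) : ℝ :=
  Real.sqrt ((Xᴴ * X).trace.re)

lemma frob_sq {P : Type*} [Fintype P] (X : Matrix P P ℂ) :
    (Xᴴ * X).trace.re = ∑ p : P, ∑ q : P, Complex.normSq (X p q) := by
  rw [Matrix.trace, Complex.re_sum]
  rw [Finset.sum_comm]
  refine Finset.sum_congr rfl fun p _ => ?_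
  rw [Matrix.diag_apply, Matrix.mul_apply, Complex.re_sum]
  refine Finset.sum_congr rfl fun q _ => ?_
  simp [Matrix.conjTranspose_apply, Complex.star_def, ← Complex.normSq_eq_conj_mul_self]

/-- `Φ(Z) = Z − (I_m/m) ⊗ (tr_1(Z) − σ)` is the Frobenius least-squares projection of a
Hermitian `Z` onto the affine set of Hermitian matrices with first partial trace `σ`. -/
theorem stmt12 {m n : ℕ} (hm : 0 < m) (hn : 0 < n)
    (Z : Matrix (Fin m × Fin n) (Fin m × Fin n) ℂ) (hZ : Z.IsHermitian)
    (σ : Matrix (Fin n) (Fin n) ℂ) (hσ : σ.IsHermitian)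
    (Φ : Matrix (Fin m × Fin n) (Fin m × Fin n) ℂ)
    (hΦ : Φ = Z - ((m : ℂ)⁻¹ • (1 : Matrix (Fin m) (Fin m) ℂ)) ⊗ₖ (trace1 Z - σ)) :
    trace1 Φ = σ ∧
      ∀ X : Matrix (Fin m × Fin n) (Fin m × Fin n) ℂ,
        X.IsHermitian → trace1 X = σ →
          frobNorm (Z - Φ) ≤ frobNorm (Z - X) := by
  set T : Matrix (Fin n) (Fin n) ℂ := trace1 Z - σ with hT
  have hm0 : (m : ℝ) ≠ 0 := Nat.cast_ne_zero.mpr hm.ne'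
  have hmc : (m : ℂ) ≠ 0 := Nat.cast_ne_zero.mpr hm.ne'
  constructor
  · ext i j
    simp only [hΦ, trace1, Matrix.of_apply, Matrix.sub_apply, Matrix.kroneckerMap_apply,
      Matrix.smul_apply, Matrix.one_apply_eq, smul_eq_mul, mul_one, Finset.sum_sub_distrib,
      Finset.sum_const, Finset.card_univ, Fintype.card_fin, nsmul_eq_mul, hT,
      Matrix.sub_apply]
    rw [← mul_assoc, mul_inv_cancel₀ hmc, one_mul, sub_sub_cancel]
  · intro X hX htX
    set Y := Z - X with hY
    have hZΦ : Z - Φ = ((m : ℂ)⁻¹ • (1 : Matrix (Fin m) (Fin m) ℂ)) ⊗ₖ T := by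
      rw [hΦ]; abel
    have hTY : ∀ i j : Fin n, T i j = ∑ k : Fin m, Y (k, i) (k, j) := by
      intro i j
      have h1 := congrFun (congrFun htX i) j
      simp only [trace1, Matrix.of_apply] at h1
      simp only [hT, hY, Matrix.sub_apply, Finset.sum_sub_distrib]
      rw [h1]
      rfl
    unfold frobNorm
    apply Real.sqrt_le_sqrt
    rw [frob_sq, frob_sq, hZΦ]
    have hK : ∀ (k l : Fin m) (i j : Fin n),
        Complex.normSq ((((m:ℂ)⁻¹ • (1 : Matrix (Fin m) (Fin m) ℂ)) ⊗ₖ T) (k,i) (l,j)) =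
          if k = l then ((m:ℝ)⁻¹)^2 * Complex.normSq (T i j) else 0 := by
      intro k l i j
      by_cases h : k = l <;>
        simp [Matrix.kroneckerMap_apply, Matrix.one_apply, h, Complex.normSq_mul, pow_two,
          Complex.normSq_inv, Complex.normSq_natCast]
    have hL : (∑ p : Fin m × Fin n, ∑ q : Fin m × Fin n,
        Complex.normSq (((((m:ℂ)⁻¹ • (1 : Matrix (Fin m) (Fin m) ℂ)) ⊗ₖ T)) p q))
        = (m:ℝ)⁻¹ * ∑ i : Fin n, ∑ j : Fin n, Complex.normSq (T i j) := by
      rw [Fintype.sum_prod_type]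
      simp only [Fintype.sum_prod_type, hK]
      have hin : ∀ (k : Fin m) (i : Fin n),
          (∑ l : Fin m, ∑ j : Fin n,
            (if k = l then ((m:ℝ)⁻¹)^2 * Complex.normSq (T i j) else 0))
          = ∑ j : Fin n, ((m:ℝ)⁻¹)^2 * Complex.normSq (T i j) := by
        intro k i
        rw [Finset.sum_comm]
        simp
      simp only [hin, Finset.sum_const, Finset.card_univ, Fintype.card_fin, nsmul_eq_mul,
        Finset.mul_sum]
      refine Finset.sum_congr rfl fun i _ => Finset.sum_congr rfl fun j _ => ?_
      field_simp
    rw [hL]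
    have key : ∀ i j : Fin n, Complex.normSq (T i j) ≤
        (m : ℝ) * ∑ k : Fin m, Complex.normSq (Y (k,i) (k,j)) := by
      intro i j
      rw [hTY i j]
      calc Complex.normSq (∑ k : Fin m, Y (k,i) (k,j))
          = ‖∑ k : Fin m, Y (k,i) (k,j)‖ ^ 2 := (Complex.sq_norm _).symm
        _ ≤ (∑ k : Fin m, ‖Y (k,i) (k,j)‖) ^ 2 := by
            apply pow_le_pow_left₀ (norm_nonneg _)
            exact norm_sum_le _ _
        _ ≤ (Finset.univ.card : ℝ) * ∑ k : Fin m, ‖Y (k,i) (k,j)‖ ^ 2 :=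
            sq_sum_le_card_mul_sum_sq
        _ = (m : ℝ) * ∑ k : Fin m, Complex.normSq (Y (k,i) (k,j)) := by
            simp [Complex.sq_norm]
    calc (m:ℝ)⁻¹ * ∑ i : Fin n, ∑ j : Fin n, Complex.normSq (T i j)
        ≤ (m:ℝ)⁻¹ * ∑ i : Fin n, ∑ j : Fin n,
            ((m : ℝ) * ∑ k : Fin m, Complex.normSq (Y (k,i) (k,j))) := by
          apply mul_le_mul_of_nonneg_left _ (by positivity)
          exact Finset.sum_le_sum fun i _ => Finset.sum_le_sum fun j _ => key i j
      _ = ∑ i : Fin n, ∑ j : Fin n, ∑ k : Fin m, Complex.normSq (Y (k,i) (k,j)) := by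
          simp only [Finset.mul_sum]
          refine Finset.sum_congr rfl fun i _ => Finset.sum_congr rfl fun j _ =>
            Finset.sum_congr rfl fun k _ => ?_
          rw [← mul_assoc, inv_mul_cancel₀ hm0, one_mul]
      _ = ∑ k : Fin m, ∑ i : Fin n, ∑ j : Fin n, Complex.normSq (Y (k,i) (k,j)) := by
          have h2 : ∀ i : Fin n,
              (∑ j : Fin n, ∑ k : Fin m, Complex.normSq (Y (k,i) (k,j)))
              = ∑ k : Fin m, ∑ j : Fin n, Complex.normSq (Y (k,i) (k,j)) :=
            fun i => Finset.sum_comm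
          simp only [h2]
          exact Finset.sum_comm
      _ ≤ ∑ p : Fin m × Fin n, ∑ q : Fin m × Fin n, Complex.normSq (Y p q) := by
          rw [Fintype.sum_prod_type]
          refine Finset.sum_le_sum fun k _ => Finset.sum_le_sum fun i _ => ?_
          rw [Fintype.sum_prod_type]
          exact Finset.single_le_sum
            (f := fun l => ∑ j : Fin n, Complex.normSq (Y (k,i) (l,j)))
            (fun l _ => Finset.sum_nonneg fun j _ => Complex.normSq_nonneg _)
            (Finset.mem_univ k)
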